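/- arXiv:math/0307218 — 2 statements merged into one kernel-verified Lean document; each statement's English description precedes it below -/
import Mathlib

section
/- Let B be an ℕ-graded bialgebra over a field such that the degree-zero component is one-dimensional, spanned by the unit. Then B admits an antipode, i.e., B is a Hopf algebra. -/
open TensorProduct

namespace Stmt6Aux

variable {k B : Type*} [CommRing k] [Ring B] [Bialgebra k B]

/-- Convolution product on `B →ₗ[k] B`. -/
noncomputable def conv (f g : B →ₗ[k] B) : B →ₗ[k] B :=
  LinearMap.mul' k B ∘ₗ TensorProduct.map f g ∘ₗ Coalgebra.comul

/-- Convolution unit. -/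
noncomputable def cunit : B →ₗ[k] B :=
  Algebra.linearMap k B ∘ₗ Coalgebra.counit

lemma conv_add_left (f g h : B →ₗ[k] B) : conv (f + g) h = conv f h + conv g h := by
  simp [conv, TensorProduct.map_add_left, LinearMap.add_comp, LinearMap.comp_add]

lemma conv_add_right (f g h : B →ₗ[k] B) : conv f (g + h) = conv f g + conv f h := by
  simp [conv, TensorProduct.map_add_right, LinearMap.add_comp, LinearMap.comp_add]

lemma conv_smul_left (c : k) (f g : B →ₗ[k] B) : conv (c • f) g = c • conv f g := by
  simp [conv, TensorProduct.map_smul_left, LinearMap.smul_comp, LinearMap.comp_smul]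

lemma conv_smul_right (c : k) (f g : B →ₗ[k] B) : conv f (c • g) = c • conv f g := by
  simp [conv, TensorProduct.map_smul_right, LinearMap.smul_comp, LinearMap.comp_smul]

lemma conv_cunit_left (g : B →ₗ[k] B) : conv cunit g = g := by
  ext x
  have h1 : TensorProduct.map (cunit (k := k) (B := B)) g =
      (TensorProduct.map (Algebra.linearMap k B) g) ∘ₗ
        (LinearMap.rTensor B (Coalgebra.counit (R := k))) := by
    rw [LinearMap.rTensor, ← TensorProduct.map_comp]
    simp [cunit]
  have h2 := Coalgebra.rTensor_counit_comul (R := k) (a := x)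
  simp only [conv, LinearMap.comp_apply, h1, h2, TensorProduct.map_tmul,
    LinearMap.mul'_apply, Algebra.linearMap_apply, map_one, one_mul, LinearMap.id_apply]

lemma conv_cunit_right (g : B →ₗ[k] B) : conv g cunit = g := by
  ext x
  have h1 : TensorProduct.map g (cunit (k := k) (B := B)) =
      (TensorProduct.map g (Algebra.linearMap k B)) ∘ₗ
        (LinearMap.lTensor B (Coalgebra.counit (R := k))) := by
    rw [LinearMap.lTensor, ← TensorProduct.map_comp]
    simp [cunit]
  have h2 := Coalgebra.lTensor_counit_comul (R := k) (a := x)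
  simp only [conv, LinearMap.comp_apply, h1, h2, TensorProduct.map_tmul,
    LinearMap.mul'_apply, Algebra.linearMap_apply, map_one, mul_one, LinearMap.id_apply]

lemma conv_assoc (f g h : B →ₗ[k] B) : conv (conv f g) h = conv f (conv g h) := by
  have key : (LinearMap.mul' k B ∘ₗ
        TensorProduct.map (LinearMap.mul' k B ∘ₗ TensorProduct.map f g) h) =
      (LinearMap.mul' k B ∘ₗ
        TensorProduct.map f (LinearMap.mul' k B ∘ₗ TensorProduct.map g h)) ∘ₗ
        (TensorProduct.assoc k B B B).toLinearMap := by
    apply TensorProduct.ext_threefold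
    intro a b c
    simp [mul_assoc]
  have hL : TensorProduct.map (conv f g) h =
      (TensorProduct.map (LinearMap.mul' k B ∘ₗ TensorProduct.map f g) h) ∘ₗ
        LinearMap.rTensor B (Coalgebra.comul (R := k)) := by
    rw [LinearMap.rTensor, ← TensorProduct.map_comp]
    simp [conv, LinearMap.comp_assoc]
  have hR : TensorProduct.map f (conv g h) =
      (TensorProduct.map f (LinearMap.mul' k B ∘ₗ TensorProduct.map g h)) ∘ₗ
        LinearMap.lTensor B (Coalgebra.comul (R := k)) := by
    rw [LinearMap.lTensor, ← TensorProduct.map_comp]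
    simp [conv, LinearMap.comp_assoc]
  ext x
  have e1 : (conv (conv f g) h) x =
      LinearMap.mul' k B ((TensorProduct.map (conv f g) h) (Coalgebra.comul (R := k) x)) := rfl
  have e2 : (conv f (conv g h)) x =
      LinearMap.mul' k B ((TensorProduct.map f (conv g h)) (Coalgebra.comul (R := k) x)) := rfl
  have hco : (TensorProduct.assoc k B B B)
      (LinearMap.rTensor B (Coalgebra.comul (R := k)) (Coalgebra.comul (R := k) x)) =
      LinearMap.lTensor B (Coalgebra.comul (R := k)) (Coalgebra.comul (R := k) x) :=
    Coalgebra.coassoc_apply x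
  rw [e1, e2, hL, hR]
  simp only [LinearMap.comp_apply]
  rw [← hco]
  have := LinearMap.congr_fun key
    (LinearMap.rTensor B (Coalgebra.comul (R := k)) (Coalgebra.comul (R := k) x))
  simpa only [LinearMap.comp_apply, LinearEquiv.coe_coe] using this




noncomputable def fbar : B →ₗ[k] B := LinearMap.id - cunit

lemma id_eq_cunit_add_fbar : (LinearMap.id : B →ₗ[k] B) = cunit + fbar := by
  simp [fbar]

noncomputable def fpow : ℕ → (B →ₗ[k] B)
  | 0 => cunit
  | n + 1 => conv (fpow n) fbar

lemma fpow_one : fpow (k := k) (B := B) 1 = fbar := by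
  show conv cunit fbar = fbar
  exact conv_cunit_left _

lemma conv_fbar_fpow (n : ℕ) :
    conv (fbar : B →ₗ[k] B) (fpow n) = fpow (n + 1) := by
  induction n with
  | zero =>
    show conv fbar cunit = fpow 1
    rw [conv_cunit_right, fpow_one]
  | succ n ih =>
    show conv fbar (conv (fpow n) fbar) = _
    rw [← conv_assoc, ih]
    rfl

lemma fbar_eq_zero (𝒜 : ℕ → Submodule k B)
    (hconn : 𝒜 0 = Submodule.span k {(1 : B)}) :
    ∀ x ∈ 𝒜 0, fbar (k := k) x = 0 := by
  intro x hx
  rw [hconn, Submodule.mem_span_singleton] at hx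
  obtain ⟨c, rfl⟩ := hx
  simp [fbar, cunit, Algebra.algebraMap_eq_smul_one]

lemma eval_on_comul (𝒜 : ℕ → Submodule k B) {n : ℕ} (T T' : B ⊗[k] B →ₗ[k] B)
    (h : ∀ i, i ≤ n →
      T ∘ₗ TensorProduct.map (𝒜 i).subtype (𝒜 (n - i)).subtype =
      T' ∘ₗ TensorProduct.map (𝒜 i).subtype (𝒜 (n - i)).subtype)
    {z : B ⊗[k] B}
    (hz : z ∈ ⨆ i ∈ Finset.range (n + 1),
      LinearMap.range (TensorProduct.map (𝒜 i).subtype (𝒜 (n - i)).subtype)) :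
    T z = T' z := by
  have hle : (⨆ i ∈ Finset.range (n + 1),
      LinearMap.range (TensorProduct.map (𝒜 i).subtype (𝒜 (n - i)).subtype)) ≤
      LinearMap.ker (T - T') := by
    refine iSup₂_le fun i hi => ?_
    rw [LinearMap.range_le_ker_iff, LinearMap.sub_comp, sub_eq_zero]
    exact h i (Nat.lt_succ_iff.mp (Finset.mem_range.mp hi))
  have := hle hz
  rw [LinearMap.mem_ker, LinearMap.sub_apply, sub_eq_zero] at this
  exact this

lemma fpow_vanish (𝒜 : ℕ → Submodule k B)
    (hconn : 𝒜 0 = Submodule.span k {(1 : B)})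
    (hΔ : ∀ n : ℕ, ∀ x ∈ 𝒜 n,
      Coalgebra.comul (R := k) x ∈
        ⨆ i ∈ Finset.range (n + 1),
          LinearMap.range (TensorProduct.map (𝒜 i).subtype (𝒜 (n - i)).subtype)) :
    ∀ N m, m ≤ N → ∀ x ∈ 𝒜 m, fpow (k := k) (N + 1) x = 0 := by
  intro N
  induction N with
  | zero =>
    intro m hm x hx
    obtain rfl : m = 0 := Nat.le_zero.mp hm
    have key : ∀ i, i ≤ 0 →
        (LinearMap.mul' k B ∘ₗ TensorProduct.map (fpow 0) fbar) ∘ₗ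
          TensorProduct.map (𝒜 i).subtype (𝒜 (0 - i)).subtype =
        (0 : B ⊗[k] B →ₗ[k] B) ∘ₗ
          TensorProduct.map (𝒜 i).subtype (𝒜 (0 - i)).subtype := by
      intro i hi
      obtain rfl : i = 0 := Nat.le_zero.mp hi
      apply TensorProduct.ext'
      intro a b
      have : fbar (k := k) (b : B) = 0 := fbar_eq_zero 𝒜 hconn _ b.2
      simp [this]
    have := eval_on_comul 𝒜 _ _ key (hΔ 0 x hx)
    simp only [LinearMap.zero_apply] at this
    exact this
  | succ N ih =>
    intro m hm x hx
    have key : ∀ i, i ≤ m →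
        (LinearMap.mul' k B ∘ₗ TensorProduct.map (fpow (N + 1)) fbar) ∘ₗ
          TensorProduct.map (𝒜 i).subtype (𝒜 (m - i)).subtype =
        (0 : B ⊗[k] B →ₗ[k] B) ∘ₗ
          TensorProduct.map (𝒜 i).subtype (𝒜 (m - i)).subtype := by
      intro i hi
      apply TensorProduct.ext'
      intro a b
      rcases eq_or_lt_of_le hi with rfl | hlt
      · have hb : (b : B) ∈ 𝒜 0 := by simpa using b.2
        have : fbar (k := k) (b : B) = 0 := fbar_eq_zero 𝒜 hconn _ hb
        simp [this]
      · have : fpow (N + 1) (a : B) = 0 := ih i (by omega) _ a.2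
        simp [this]
    have := eval_on_comul 𝒜 _ _ key (hΔ m x hx)
    simp only [LinearMap.zero_apply] at this
    exact this

noncomputable def Sfin (N : ℕ) : B →ₗ[k] B :=
  ∑ i ∈ Finset.range (N + 1), ((-1 : k) ^ i) • fpow i

lemma Sfin_conv_id (N : ℕ) :
    conv (Sfin (k := k) (B := B) N) LinearMap.id =
      cunit + ((-1 : k) ^ N) • fpow (N + 1) := by
  induction N with
  | zero =>
    have h0 : Sfin (k := k) (B := B) 0 = cunit := by simp [Sfin]; rfl
    rw [h0, conv_cunit_left, id_eq_cunit_add_fbar, ← fpow_one]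
    simp
  | succ N ih =>
    have hstep : Sfin (k := k) (B := B) (N + 1) =
        Sfin N + ((-1 : k) ^ (N + 1)) • fpow (N + 1) := by
      rw [Sfin, Finset.sum_range_succ]; rfl
    rw [hstep, conv_add_left, conv_smul_left, ih]
    have : conv (fpow (k := k) (B := B) (N + 1)) LinearMap.id =
        fpow (N + 1) + fpow (N + 2) := by
      rw [id_eq_cunit_add_fbar, conv_add_right, conv_cunit_right]
      rfl
    rw [this, pow_succ]
    module

lemma id_conv_Sfin (N : ℕ) :
    conv LinearMap.id (Sfin (k := k) (B := B) N) =
      cunit + ((-1 : k) ^ N) • fpow (N + 1) := by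
  induction N with
  | zero =>
    have h0 : Sfin (k := k) (B := B) 0 = cunit := by simp [Sfin]; rfl
    rw [h0, conv_cunit_right, id_eq_cunit_add_fbar, ← fpow_one]
    simp
  | succ N ih =>
    have hstep : Sfin (k := k) (B := B) (N + 1) =
        Sfin N + ((-1 : k) ^ (N + 1)) • fpow (N + 1) := by
      rw [Sfin, Finset.sum_range_succ]; rfl
    rw [hstep, conv_add_right, conv_smul_right, ih]
    have : conv LinearMap.id (fpow (k := k) (B := B) (N + 1)) =
        fpow (N + 1) + fpow (N + 2) := by
      rw [id_eq_cunit_add_fbar, conv_add_left, conv_cunit_left, conv_fbar_fpow]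
    rw [this, pow_succ]
    module

lemma Sfin_eq_of_le (𝒜 : ℕ → Submodule k B)
    (hconn : 𝒜 0 = Submodule.span k {(1 : B)})
    (hΔ : ∀ n : ℕ, ∀ x ∈ 𝒜 n,
      Coalgebra.comul (R := k) x ∈
        ⨆ i ∈ Finset.range (n + 1),
          LinearMap.range (TensorProduct.map (𝒜 i).subtype (𝒜 (n - i)).subtype))
    {m N : ℕ} (hmN : m ≤ N) {x : B} (hx : x ∈ 𝒜 m) :
    Sfin (k := k) N x = Sfin (k := k) m x := by
  rw [Sfin, Sfin, LinearMap.sum_apply, LinearMap.sum_apply]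
  apply (Finset.sum_subset (Finset.range_subset_range.mpr (by omega)) ?_).symm
  intro j hj hj'
  simp only [Finset.mem_range] at hj hj'
  obtain ⟨j', rfl⟩ : ∃ j'', j = j'' + 1 := ⟨j - 1, by omega⟩
  have : fpow (j' + 1) x = 0 := fpow_vanish 𝒜 hconn hΔ j' m (by omega) x hx
  simp [this]

end Stmt6Aux
open Stmt6Aux in
/-- A connected ℕ-graded bialgebra over a field (degree-zero component spanned by the
unit, multiplication and comultiplication respecting the grading) admits an antipode,
i.e. a two-sided convolution inverse of the identity. -/
theorem stmt6 {k B : Type*} [Field k] [Ring B] [Bialgebra k B]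
    (𝒜 : ℕ → Submodule k B) (hint : DirectSum.IsInternal 𝒜)
    (hgm : SetLike.GradedMonoid 𝒜)
    (hconn : 𝒜 0 = Submodule.span k {(1 : B)})
    (hΔ : ∀ n : ℕ, ∀ x ∈ 𝒜 n,
      Coalgebra.comul (R := k) x ∈
        ⨆ i ∈ Finset.range (n + 1),
          LinearMap.range (TensorProduct.map (𝒜 i).subtype (𝒜 (n - i)).subtype)) :
    ∃ S : B →ₗ[k] B,
      (∀ x : B, LinearMap.mul' k B (TensorProduct.map S LinearMap.id
          (Coalgebra.comul (R := k) x)) = algebraMap k B (Coalgebra.counit x)) ∧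
      (∀ x : B, LinearMap.mul' k B (TensorProduct.map LinearMap.id S
          (Coalgebra.comul (R := k) x)) = algebraMap k B (Coalgebra.counit x)) := by
  classical
  set decomp := LinearEquiv.ofBijective (DirectSum.coeLinearMap 𝒜) hint with hd
  set S : B →ₗ[k] B :=
    (DirectSum.toModule k ℕ B fun n => Sfin (k := k) n ∘ₗ (𝒜 n).subtype) ∘ₗ
      decomp.symm.toLinearMap with hSdef
  have hS : ∀ n, ∀ x ∈ 𝒜 n, S x = Sfin (k := k) n x := by
    intro n x hx
    have h1 : decomp.symm x = DirectSum.lof k ℕ (fun n => ↥(𝒜 n)) n ⟨x, hx⟩ := by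
      apply decomp.injective
      rw [LinearEquiv.apply_symm_apply]
      simp [hd, LinearEquiv.ofBijective_apply, DirectSum.lof_eq_of]
      exact (DirectSum.coeLinearMap_of (A := fun n => 𝒜 n) n ⟨x, hx⟩).symm
    rw [hSdef]
    simp only [LinearMap.comp_apply, LinearEquiv.coe_coe]
    rw [h1, DirectSum.toModule_lof]
    rfl
  have hScomp : ∀ n i, i ≤ n → ∀ a : ↥(𝒜 i), S (a : B) = Sfin (k := k) n (a : B) := by
    intro n i hi a
    rw [hS i a a.2, Sfin_eq_of_le 𝒜 hconn hΔ hi a.2]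
  refine ⟨S, ?_, ?_⟩
  · intro x
    have key : ∀ n, ∀ x ∈ 𝒜 n, LinearMap.mul' k B (TensorProduct.map S LinearMap.id
        (Coalgebra.comul (R := k) x)) = algebraMap k B (Coalgebra.counit x) := by
      intro n x hx
      have h1 : (LinearMap.mul' k B ∘ₗ TensorProduct.map S LinearMap.id)
            (Coalgebra.comul (R := k) x) =
          (LinearMap.mul' k B ∘ₗ TensorProduct.map (Sfin n) LinearMap.id)
            (Coalgebra.comul (R := k) x) := by
        refine eval_on_comul 𝒜 _ _ ?_ (hΔ n x hx)
        intro i hi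
        apply TensorProduct.ext'
        intro a b
        simp [hScomp n i hi a]
      have h3 := congrFun (congrArg DFunLike.coe (Sfin_conv_id (k := k) (B := B) n)) x
      have h4 : fpow (k := k) (n + 1) x = 0 := fpow_vanish 𝒜 hconn hΔ n n le_rfl x hx
      simp only [LinearMap.comp_apply] at h1
      rw [h1]
      show (conv (Sfin n) LinearMap.id) x = _
      rw [h3]
      simp [h4, cunit]
    have hx : x ∈ ⨆ n, 𝒜 n := by rw [hint.submodule_iSup_eq_top]; trivial
    refine Submodule.iSup_induction 𝒜 (motive := fun y =>
      LinearMap.mul' k B (TensorProduct.map S LinearMap.id (Coalgebra.comul (R := k) y)) =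
        algebraMap k B (Coalgebra.counit y)) hx key (by simp) ?_
    intro a b ha hb
    simp only [map_add, ha, hb]
  · intro x
    have key : ∀ n, ∀ x ∈ 𝒜 n, LinearMap.mul' k B (TensorProduct.map LinearMap.id S
        (Coalgebra.comul (R := k) x)) = algebraMap k B (Coalgebra.counit x) := by
      intro n x hx
      have h1 : (LinearMap.mul' k B ∘ₗ TensorProduct.map LinearMap.id S)
            (Coalgebra.comul (R := k) x) =
          (LinearMap.mul' k B ∘ₗ TensorProduct.map LinearMap.id (Sfin n))
            (Coalgebra.comul (R := k) x) := by
        refine eval_on_comul 𝒜 _ _ ?_ (hΔ n x hx)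
        intro i hi
        apply TensorProduct.ext'
        intro a b
        have hb' : (b : B) ∈ 𝒜 (n - i) := b.2
        have : S (b : B) = Sfin n (b : B) := hScomp n (n - i) (by omega) ⟨b, hb'⟩
        simp [this]
      have h3 := congrFun (congrArg DFunLike.coe (id_conv_Sfin (k := k) (B := B) n)) x
      have h4 : fpow (k := k) (n + 1) x = 0 := fpow_vanish 𝒜 hconn hΔ n n le_rfl x hx
      simp only [LinearMap.comp_apply] at h1
      rw [h1]
      show (conv LinearMap.id (Sfin n)) x = _
      rw [h3]
      simp [h4, cunit]
    have hx : x ∈ ⨆ n, 𝒜 n := by rw [hint.submodule_iSup_eq_top]; trivial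
    refine Submodule.iSup_induction 𝒜 (motive := fun y =>
      LinearMap.mul' k B (TensorProduct.map LinearMap.id S (Coalgebra.comul (R := k) y)) =
        algebraMap k B (Coalgebra.counit y)) hx key (by simp) ?_
    intro a b ha hb
    simp only [map_add, ha, hb]
end

section
/- If Δ : A → A ⊗ A is the deconcatenation coproduct on the tensor algebra T(V) (sum over all splittings of a word into a prefix and suffix) and ⧢ is the shuffle product, then (T(V), ⧢, Δ) is a bialgebra: Δ(u ⧢ w) = Δ(u) ⧢ Δ(w), where the product on T(V)⊗T(V) is the componentwise shuffle product. -/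
variable {ι K : Type*} [Field K]

/-- The (unsigned) shuffle product of two words, as an element of the free module
on words: the sum over all `(p,q)`-shuffles of the interleaved words. -/
noncomputable def wordShuffle : List ι → List ι → (List ι →₀ K)
  | [], w => Finsupp.single w 1
  | a :: u, [] => Finsupp.single (a :: u) 1
  | a :: u, b :: w =>
      Finsupp.mapDomain (List.cons a) (wordShuffle u (b :: w)) +
      Finsupp.mapDomain (List.cons b) (wordShuffle (a :: u) w)
  termination_by u w => u.length + w.length
  decreasing_by all_goals simp

/-- The bilinear extension of the shuffle product to `T(V)`. -/
noncomputable def shuffleMul (x y : List ι →₀ K) : List ι →₀ K :=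
  x.sum fun u cu => y.sum fun w cw => (cu * cw) • wordShuffle u w

/-- The deconcatenation coproduct on `T(V)`: the sum over all splittings of a word
into a prefix and a suffix, with `T(V) ⊗ T(V)` modelled as the free module on pairs
of words. -/
noncomputable def decat (x : List ι →₀ K) : List ι × List ι →₀ K :=
  x.sum fun l c => ∑ i ∈ Finset.range (l.length + 1),
    Finsupp.single (l.take i, l.drop i) c

/-- The componentwise shuffle product on `T(V) ⊗ T(V)`. -/
noncomputable def shuffleMul2 (x y : List ι × List ι →₀ K) : List ι × List ι →₀ K :=
  x.sum fun p cp => y.sum fun q cq => (cp * cq) •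
    ((wordShuffle p.1 q.1).sum fun u cu => (wordShuffle p.2 q.2).sum fun w cw =>
      Finsupp.single (u, w) (cu * cw))


section Aux

lemma ws_nil_left (w : List ι) : wordShuffle [] w = Finsupp.single w (1:K) := by
  rw [wordShuffle]

lemma ws_nil_right (p : List ι) : wordShuffle p [] = Finsupp.single p (1:K) := by
  cases p <;> rw [wordShuffle]

lemma ws_cons_cons (a b : ι) (u w : List ι) :
    (wordShuffle (a :: u) (b :: w) : List ι →₀ K) =
      Finsupp.mapDomain (List.cons a) (wordShuffle u (b :: w)) +
      Finsupp.mapDomain (List.cons b) (wordShuffle (a :: u) w) := by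
  rw [wordShuffle]

/-- Bilinear pairing building pairs of words. -/
noncomputable def FF (x y : List ι →₀ K) : List ι × List ι →₀ K :=
  x.sum fun s cs => y.sum fun t ct => Finsupp.single (s, t) (cs * ct)

lemma decat_single (l : List ι) (c : K) :
    decat (Finsupp.single l c) =
      ∑ i ∈ Finset.range (l.length + 1), Finsupp.single (l.take i, l.drop i) c := by
  rw [decat, Finsupp.sum_single_index]
  simp

lemma decat_add (x y : List ι →₀ K) : decat (x + y) = decat x + decat y := by
  rw [decat, Finsupp.sum_add_index'] <;>
    simp [decat, Finset.sum_add_distrib, Finsupp.single_add]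

lemma decat_smul (c : K) (x : List ι →₀ K) : decat (c • x) = c • decat x := by
  rw [decat, Finsupp.sum_smul_index, decat, Finsupp.smul_sum]
  · congr 1; ext l d
    rw [Finset.smul_sum]
    simp [Finsupp.smul_single, mul_comm]
  · simp

lemma FF_single_single (s t : List ι) (c d : K) :
    FF (Finsupp.single s c) (Finsupp.single t d) = Finsupp.single (s, t) (c * d) := by
  rw [FF, Finsupp.sum_single_index, Finsupp.sum_single_index] <;> simp

lemma FF_add_left (x x' y : List ι →₀ K) : FF (x + x') y = FF x y + FF x' y := by
  rw [FF, Finsupp.sum_add_index'] <;>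
    simp [FF, add_mul, Finsupp.single_add, Finsupp.sum_add]

lemma FF_single_one_left (s : List ι) (y : List ι →₀ K) :
    FF (Finsupp.single s 1) y = Finsupp.mapDomain (fun t => (s, t)) y := by
  rw [FF, Finsupp.sum_single_index]
  · rw [Finsupp.mapDomain]
    simp
  · simp

lemma FF_mapDomain_left (a : ι) (x y : List ι →₀ K) :
    FF (Finsupp.mapDomain (List.cons a) x) y =
      Finsupp.mapDomain (fun pq : List ι × List ι => (a :: pq.1, pq.2)) (FF x y) := by
  induction x using Finsupp.induction with
  | zero => simp [FF]
  | single_add s c f hs hc ih =>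
      rw [Finsupp.mapDomain_add, FF_add_left, ih, Finsupp.mapDomain_single,
        FF_add_left, Finsupp.mapDomain_add]
      congr 1
      rw [FF, FF, Finsupp.sum_single_index, Finsupp.sum_single_index]
      · rw [Finsupp.sum, Finsupp.sum, Finsupp.mapDomain_finset_sum]
        refine Finset.sum_congr rfl fun t _ => ?_
        rw [Finsupp.mapDomain_single]
      · simp
      · simp

lemma decat_mapDomain_cons (a : ι) (x : List ι →₀ K) :
    decat (Finsupp.mapDomain (List.cons a) x) =
      Finsupp.mapDomain (fun l => (([] : List ι), a :: l)) x +
      Finsupp.mapDomain (fun pq : List ι × List ι => (a :: pq.1, pq.2)) (decat x) := by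
  induction x using Finsupp.induction with
  | zero => simp [decat]
  | single_add l c f hl hc ih =>
      rw [Finsupp.mapDomain_add, decat_add, Finsupp.mapDomain_single, ih,
        Finsupp.mapDomain_add, decat_add, Finsupp.mapDomain_add]
      have key : decat (Finsupp.single (a :: l) c) =
          Finsupp.mapDomain (fun l => (([] : List ι), a :: l)) (Finsupp.single l c) +
          Finsupp.mapDomain (fun pq : List ι × List ι => (a :: pq.1, pq.2))
            (decat (Finsupp.single l c)) := by
        rw [decat_single, decat_single, Finsupp.mapDomain_single,
          Finsupp.mapDomain_finset_sum]
        rw [show (a :: l).length + 1 = l.length + 1 + 1 by simp,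
          Finset.sum_range_succ']
        simp only [List.take_succ_cons, List.drop_succ_cons, List.take_zero,
          List.drop_zero, Finsupp.mapDomain_single]
        rw [add_comm]
      rw [key]; abel

lemma core : ∀ (p q : List ι),
    decat (wordShuffle p q : List ι →₀ K) =
      ∑ i ∈ Finset.range (p.length + 1), ∑ j ∈ Finset.range (q.length + 1),
        FF (wordShuffle (p.take i) (q.take j)) (wordShuffle (p.drop i) (q.drop j))
  | [], q => by
      rw [ws_nil_left, decat_single]
      simp only [List.length_nil, zero_add, Finset.range_one, Finset.sum_singleton,
        List.take_nil, List.drop_nil]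
      refine Finset.sum_congr rfl fun j _ => ?_
      rw [ws_nil_left, ws_nil_left, FF_single_single, mul_one]
  | a :: u, [] => by
      rw [ws_nil_right, decat_single]
      simp only [List.length_nil, zero_add, Finset.range_one, Finset.sum_singleton,
        List.take_nil, List.drop_nil]
      refine Finset.sum_congr rfl fun i _ => ?_
      rw [ws_nil_right, ws_nil_right, FF_single_single, mul_one]
  | a :: u, b :: w => by
      have IH1 := core u (b :: w)
      have IH2 := core (a :: u) w
      rw [ws_cons_cons, decat_add, decat_mapDomain_cons, decat_mapDomain_cons, IH1, IH2]
      simp only [Finsupp.mapDomain_finset_sum, List.length_cons]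
      have key0 : Finsupp.mapDomain (fun l => (([] : List ι), a :: l)) (wordShuffle u (b :: w) : List ι →₀ K) +
          Finsupp.mapDomain (fun l => (([] : List ι), b :: l)) (wordShuffle (a :: u) w : List ι →₀ K) =
          FF (wordShuffle ([] : List ι) ([] : List ι)) (wordShuffle (a :: u) (b :: w)) := by
        rw [ws_nil_left, FF_single_one_left, ws_cons_cons, Finsupp.mapDomain_add,
          ← Finsupp.mapDomain_comp, ← Finsupp.mapDomain_comp]
        rfl
      have key1 : ∀ i j : ℕ,
          (FF (wordShuffle (a :: List.take i u) (b :: List.take j w))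
              (wordShuffle (List.drop i u) (List.drop j w)) : List ι × List ι →₀ K) =
            Finsupp.mapDomain (fun pq : List ι × List ι => (a :: pq.1, pq.2))
              (FF (wordShuffle (List.take i u) (b :: List.take j w))
                (wordShuffle (List.drop i u) (List.drop j w))) +
            Finsupp.mapDomain (fun pq : List ι × List ι => (b :: pq.1, pq.2))
              (FF (wordShuffle (a :: List.take i u) (List.take j w))
                (wordShuffle (List.drop i u) (List.drop j w))) := by
        intro i j
        rw [ws_cons_cons, FF_add_left, FF_mapDomain_left, FF_mapDomain_left]
      have key2 : ∀ i : ℕ,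
          (FF (wordShuffle (a :: List.take i u) ([] : List ι))
              (wordShuffle (List.drop i u) (b :: w)) : List ι × List ι →₀ K) =
            Finsupp.mapDomain (fun pq : List ι × List ι => (a :: pq.1, pq.2))
              (FF (wordShuffle (List.take i u) ([] : List ι))
                (wordShuffle (List.drop i u) (b :: w))) := by
        intro i
        rw [ws_nil_right, ws_nil_right,
          show (Finsupp.single (a :: List.take i u) (1:K)) =
            Finsupp.mapDomain (List.cons a) (Finsupp.single (List.take i u) 1) by
              rw [Finsupp.mapDomain_single],
          FF_mapDomain_left]
      have key3 : ∀ j : ℕ,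
          (FF (wordShuffle ([] : List ι) (b :: List.take j w))
              (wordShuffle (a :: u) (List.drop j w)) : List ι × List ι →₀ K) =
            Finsupp.mapDomain (fun pq : List ι × List ι => (b :: pq.1, pq.2))
              (FF (wordShuffle ([] : List ι) (List.take j w))
                (wordShuffle (a :: u) (List.drop j w))) := by
        intro j
        rw [ws_nil_left, ws_nil_left,
          show (Finsupp.single (b :: List.take j w) (1:K)) =
            Finsupp.mapDomain (List.cons b) (Finsupp.single (List.take j w) 1) by
              rw [Finsupp.mapDomain_single],
          FF_mapDomain_left]
      -- split the RHS inner sums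
      have hR1 : ∀ i : ℕ, (∑ j ∈ Finset.range (w.length + 1 + 1),
            FF (wordShuffle (List.take i (a :: u)) (List.take j (b :: w)))
              (wordShuffle (List.drop i (a :: u)) (List.drop j (b :: w))) :
              List ι × List ι →₀ K) =
          (∑ j ∈ Finset.range (w.length + 1),
            FF (wordShuffle (List.take i (a :: u)) (b :: List.take j w))
              (wordShuffle (List.drop i (a :: u)) (List.drop j w))) +
          FF (wordShuffle (List.take i (a :: u)) ([] : List ι))
            (wordShuffle (List.drop i (a :: u)) (b :: w)) := by
        intro i
        rw [Finset.sum_range_succ']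
        simp only [List.take_succ_cons, List.drop_succ_cons, List.take_zero, List.drop_zero]
      -- split the LHS inner sums (first double sum, over j)
      have hL1 : ∀ x : ℕ, (∑ i ∈ Finset.range (w.length + 1 + 1),
            Finsupp.mapDomain (fun pq : List ι × List ι => (a :: pq.1, pq.2))
              (FF (wordShuffle (List.take x u) (List.take i (b :: w)))
                (wordShuffle (List.drop x u) (List.drop i (b :: w)))) :
              List ι × List ι →₀ K) =
          (∑ i ∈ Finset.range (w.length + 1),
            Finsupp.mapDomain (fun pq : List ι × List ι => (a :: pq.1, pq.2))
              (FF (wordShuffle (List.take x u) (b :: List.take i w))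
                (wordShuffle (List.drop x u) (List.drop i w)))) +
          Finsupp.mapDomain (fun pq : List ι × List ι => (a :: pq.1, pq.2))
            (FF (wordShuffle (List.take x u) ([] : List ι))
              (wordShuffle (List.drop x u) (b :: w))) := by
        intro x
        rw [Finset.sum_range_succ']
        simp only [List.take_succ_cons, List.drop_succ_cons, List.take_zero, List.drop_zero]
      simp only [hR1, hL1]
      -- split the LHS second double sum, over its outer index
      rw [show (∑ x ∈ Finset.range (u.length + 1 + 1),
            ∑ i ∈ Finset.range (w.length + 1),
              Finsupp.mapDomain (fun pq : List ι × List ι => (b :: pq.1, pq.2))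
                (FF (wordShuffle (List.take x (a :: u)) (List.take i w))
                  (wordShuffle (List.drop x (a :: u)) (List.drop i w))) :
              List ι × List ι →₀ K) =
          (∑ x ∈ Finset.range (u.length + 1),
            ∑ i ∈ Finset.range (w.length + 1),
              Finsupp.mapDomain (fun pq : List ι × List ι => (b :: pq.1, pq.2))
                (FF (wordShuffle (a :: List.take x u) (List.take i w))
                  (wordShuffle (List.drop x u) (List.drop i w)))) +
          ∑ i ∈ Finset.range (w.length + 1),
            Finsupp.mapDomain (fun pq : List ι × List ι => (b :: pq.1, pq.2))
              (FF (wordShuffle ([] : List ι) (List.take i w))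
                (wordShuffle (a :: u) (List.drop i w))) by
        rw [Finset.sum_range_succ']
        simp only [List.take_succ_cons, List.drop_succ_cons, List.take_zero, List.drop_zero]]
      -- split the RHS outer sum
      rw [Finset.sum_add_distrib, Finset.sum_add_distrib]
      rw [show (∑ x ∈ Finset.range (u.length + 1 + 1),
            ∑ j ∈ Finset.range (w.length + 1),
              FF (wordShuffle (List.take x (a :: u)) (b :: List.take j w))
                (wordShuffle (List.drop x (a :: u)) (List.drop j w)) :
              List ι × List ι →₀ K) =
          (∑ x ∈ Finset.range (u.length + 1),
            ∑ j ∈ Finset.range (w.length + 1),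
              FF (wordShuffle (a :: List.take x u) (b :: List.take j w))
                (wordShuffle (List.drop x u) (List.drop j w))) +
          ∑ j ∈ Finset.range (w.length + 1),
            FF (wordShuffle ([] : List ι) (b :: List.take j w))
              (wordShuffle (a :: u) (List.drop j w)) by
        rw [Finset.sum_range_succ']
        simp only [List.take_succ_cons, List.drop_succ_cons, List.take_zero, List.drop_zero]]
      rw [show (∑ x ∈ Finset.range (u.length + 1 + 1),
            FF (wordShuffle (List.take x (a :: u)) ([] : List ι))
              (wordShuffle (List.drop x (a :: u)) (b :: w)) :
              List ι × List ι →₀ K) =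
          (∑ x ∈ Finset.range (u.length + 1),
            FF (wordShuffle (a :: List.take x u) ([] : List ι))
              (wordShuffle (List.drop x u) (b :: w))) +
          FF (wordShuffle ([] : List ι) ([] : List ι))
            (wordShuffle (a :: u) (b :: w)) by
        rw [Finset.sum_range_succ']
        simp only [List.take_succ_cons, List.drop_succ_cons, List.take_zero, List.drop_zero]]
      simp only [key1, key2, key3, Finset.sum_add_distrib]
      rw [← key0]
      abel
  termination_by p q => p.length + q.length

end Aux

lemma shuffleMul_zero_left (y : List ι →₀ K) : shuffleMul 0 y = 0 := by
  rw [shuffleMul, Finsupp.sum_zero_index]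

lemma shuffleMul_add_left (x x' y : List ι →₀ K) :
    shuffleMul (x + x') y = shuffleMul x y + shuffleMul x' y := by
  rw [shuffleMul, Finsupp.sum_add_index'] <;>
    simp [shuffleMul, add_mul, add_smul, Finsupp.sum_add]

lemma shuffleMul_single_single (p q : List ι) (c d : K) :
    shuffleMul (Finsupp.single p c) (Finsupp.single q d) = (c * d) • wordShuffle p q := by
  rw [shuffleMul, Finsupp.sum_single_index, Finsupp.sum_single_index] <;> simp

lemma shuffleMul_zero_right (x : List ι →₀ K) : shuffleMul x 0 = 0 := by
  simp [shuffleMul, Finsupp.sum_zero_index]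

lemma shuffleMul_add_right (x y y' : List ι →₀ K) :
    shuffleMul x (y + y') = shuffleMul x y + shuffleMul x y' := by
  have h : ∀ (p : List ι) (cu : K),
      (y + y').sum (fun q cw => (cu * cw) • wordShuffle p q) =
        y.sum (fun q cw => (cu * cw) • (wordShuffle p q : List ι →₀ K)) +
        y'.sum (fun q cw => (cu * cw) • wordShuffle p q) :=
    fun p cu => Finsupp.sum_add_index' (by simp) (by intros; rw [mul_add, add_smul])
  simp only [shuffleMul, h, Finsupp.sum_add]

lemma shuffleMul2_zero_left (y : List ι × List ι →₀ K) : shuffleMul2 0 y = 0 := by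
  rw [shuffleMul2, Finsupp.sum_zero_index]

lemma shuffleMul2_add_left (x x' y : List ι × List ι →₀ K) :
    shuffleMul2 (x + x') y = shuffleMul2 x y + shuffleMul2 x' y := by
  rw [shuffleMul2, Finsupp.sum_add_index'] <;>
    simp [shuffleMul2, add_mul, add_smul, Finsupp.sum_add]

lemma shuffleMul2_zero_right (x : List ι × List ι →₀ K) : shuffleMul2 x 0 = 0 := by
  simp [shuffleMul2, Finsupp.sum_zero_index]

lemma shuffleMul2_add_right (x y y' : List ι × List ι →₀ K) :
    shuffleMul2 x (y + y') = shuffleMul2 x y + shuffleMul2 x y' := by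
  have h : ∀ (p : List ι × List ι) (cp : K),
      (y + y').sum (fun q cq => (cp * cq) •
          ((wordShuffle p.1 q.1 : List ι →₀ K).sum fun s cs =>
            (wordShuffle p.2 q.2 : List ι →₀ K).sum fun t ct =>
            Finsupp.single (s, t) (cs * ct))) =
        y.sum (fun q cq => (cp * cq) •
          ((wordShuffle p.1 q.1 : List ι →₀ K).sum fun s cs =>
            (wordShuffle p.2 q.2 : List ι →₀ K).sum fun t ct =>
            Finsupp.single (s, t) (cs * ct))) +
        y'.sum (fun q cq => (cp * cq) •
          ((wordShuffle p.1 q.1 : List ι →₀ K).sum fun s cs =>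
            (wordShuffle p.2 q.2 : List ι →₀ K).sum fun t ct =>
            Finsupp.single (s, t) (cs * ct))) :=
    fun p cp => Finsupp.sum_add_index' (by simp) (by intros; rw [mul_add, add_smul])
  simp only [shuffleMul2, h, Finsupp.sum_add]

lemma shuffleMul2_single_single (P Q : List ι × List ι) (c d : K) :
    shuffleMul2 (Finsupp.single P c) (Finsupp.single Q d) =
      (c * d) • FF (wordShuffle P.1 Q.1) (wordShuffle P.2 Q.2) := by
  rw [shuffleMul2, Finsupp.sum_single_index, Finsupp.sum_single_index, FF] <;> simp

lemma shuffleMul2_sum_left {α : Type*} (s : Finset α) (f : α → (List ι × List ι →₀ K))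
    (y : List ι × List ι →₀ K) :
    shuffleMul2 (∑ a ∈ s, f a) y = ∑ a ∈ s, shuffleMul2 (f a) y :=
  map_sum (⟨⟨fun x => shuffleMul2 x y, shuffleMul2_zero_left y⟩,
    fun x x' => shuffleMul2_add_left x x' y⟩ : (List ι × List ι →₀ K) →+ _) f s

lemma shuffleMul2_sum_right {α : Type*} (x : List ι × List ι →₀ K) (s : Finset α)
    (f : α → (List ι × List ι →₀ K)) :
    shuffleMul2 x (∑ a ∈ s, f a) = ∑ a ∈ s, shuffleMul2 x (f a) :=
  map_sum (⟨⟨fun y => shuffleMul2 x y, shuffleMul2_zero_right x⟩,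
    fun y y' => shuffleMul2_add_right x y y'⟩ : (List ι × List ι →₀ K) →+ _) f s

lemma decat_zero : decat (0 : List ι →₀ K) = 0 := by
  rw [decat, Finsupp.sum_zero_index]

lemma stmt_single (p : List ι) (c : K) (w : List ι →₀ K) :
    decat (shuffleMul (Finsupp.single p c) w) =
      shuffleMul2 (decat (Finsupp.single p c)) (decat w) := by
  induction w using Finsupp.induction with
  | zero => rw [shuffleMul_zero_right, decat_zero, shuffleMul2_zero_right]
  | single_add q d g hq hd ihw =>
      rw [shuffleMul_add_right, decat_add, decat_add, shuffleMul2_add_right, ihw]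
      congr 1
      rw [shuffleMul_single_single, decat_smul, core p q, decat_single, decat_single,
        shuffleMul2_sum_left]
      rw [Finset.smul_sum]
      refine Finset.sum_congr rfl fun i _ => ?_
      rw [shuffleMul2_sum_right, Finset.smul_sum]
      refine Finset.sum_congr rfl fun j _ => ?_
      rw [shuffleMul2_single_single]

/-- Bialgebra compatibility of the shuffle product and the deconcatenation coproduct:
`Δ(u ⧢ w) = Δ(u) ⧢ Δ(w)`. -/
theorem stmt10 (u w : List ι →₀ K) :
    decat (shuffleMul u w) = shuffleMul2 (decat u) (decat w) := by
  induction u using Finsupp.induction with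
  | zero => rw [shuffleMul_zero_left, decat_zero, shuffleMul2_zero_left]
  | single_add p c f hp hc ihu =>
      rw [shuffleMul_add_left, decat_add, decat_add, shuffleMul2_add_left, ihu,
        stmt_single]
end
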